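/- Let ϕ : ℝ → ℝ_{≥0} be even, nonnegative, ϕ(0)=0, differentiable with ϕ' increasing on ℝ, and let φ(β) = ∑ᵢ ϕ(βᵢ). Then for each η > 0, the function h_η(β) = η·ϕ⁻¹(φ(β/η)) has gradient components ∂_k h_η(β) = ϕ'(β_k/η) / ϕ'(ϕ⁻¹(∑ᵢ ϕ(βᵢ/η))) lying in [−1, 1]; in particular the family (h_η)_{η>0} is uniformly Lipschitz. -/

import Mathlib

open Set Finset

section aux
variable {ϕ ϕinv : ℝ → ℝ}

lemma aux_deriv_odd (heven : ∀ t, ϕ (-t) = ϕ t) (t : ℝ) :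
    deriv ϕ (-t) = - deriv ϕ t := by
  have h : (fun x => ϕ (-x)) = ϕ := funext heven
  have h2 := deriv_comp_neg (f := ϕ) (x := t)
  rw [h] at h2
  linarith

lemma aux_deriv_zero (heven : ∀ t, ϕ (-t) = ϕ t) : deriv ϕ 0 = 0 := by
  have := aux_deriv_odd heven 0
  rw [neg_zero] at this; linarith

lemma aux_deriv_nonneg (heven : ∀ t, ϕ (-t) = ϕ t)
    (hderiv_mono : Monotone (deriv ϕ)) {t : ℝ} (ht : 0 ≤ t) : 0 ≤ deriv ϕ t := by
  rw [← aux_deriv_zero heven]; exact hderiv_mono ht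

lemma aux_abs_deriv (heven : ∀ t, ϕ (-t) = ϕ t)
    (hderiv_mono : Monotone (deriv ϕ)) (u : ℝ) : |deriv ϕ u| = deriv ϕ |u| := by
  rcases le_or_gt 0 u with h | h
  · rw [abs_of_nonneg h, abs_of_nonneg (aux_deriv_nonneg heven hderiv_mono h)]
  · have h1 : deriv ϕ (-u) = - deriv ϕ u := aux_deriv_odd heven u
    have h2 : 0 ≤ deriv ϕ (-u) := aux_deriv_nonneg heven hderiv_mono (by linarith)
    have h3 : deriv ϕ u = -(deriv ϕ (-u)) := by linarith
    rw [abs_of_neg h, h3, abs_neg, abs_of_nonneg h2]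

lemma aux_mono (heven : ∀ t, ϕ (-t) = ϕ t) (hdiff : Differentiable ℝ ϕ)
    (hderiv_mono : Monotone (deriv ϕ)) : MonotoneOn ϕ (Ici 0) := by
  apply monotoneOn_of_deriv_nonneg (convex_Ici 0) hdiff.continuous.continuousOn
    (hdiff.differentiableOn.mono interior_subset)
  intro x hx
  rw [interior_Ici] at hx
  exact aux_deriv_nonneg heven hderiv_mono (le_of_lt hx)

lemma aux_even_abs (heven : ∀ t, ϕ (-t) = ϕ t) (u : ℝ) : ϕ u = ϕ |u| := by
  rcases le_or_gt 0 u with h | h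
  · rw [abs_of_nonneg h]
  · rw [abs_of_neg h, ← heven u]

lemma aux_pos (hnn : ∀ t, 0 ≤ ϕ t) (h0 : ϕ 0 = 0)
    (hinv1 : ∀ t, 0 ≤ t → ϕinv (ϕ t) = t) {t : ℝ} (ht : 0 < t) : 0 < ϕ t := by
  rcases lt_or_eq_of_le (hnn t) with h | h
  · exact h
  · exfalso
    have h1 : ϕinv (ϕ t) = t := hinv1 t ht.le
    have h2 : ϕinv (ϕ 0) = 0 := hinv1 0 le_rfl
    rw [h0] at h2
    rw [← h, h2] at h1
    linarith

lemma aux_le (heven : ∀ t, ϕ (-t) = ϕ t) (hdiff : Differentiable ℝ ϕ)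
    (hderiv_mono : Monotone (deriv ϕ))
    (hinv1 : ∀ t, 0 ≤ t → ϕinv (ϕ t) = t)
    {u v : ℝ} (hv : 0 ≤ v) (h : ϕ u ≤ ϕ v) : |u| ≤ v := by
  by_contra hlt
  push_neg at hlt
  have h1 : ϕ v ≤ ϕ |u| := aux_mono heven hdiff hderiv_mono hv
    (le_trans hv hlt.le) hlt.le
  rw [← aux_even_abs heven] at h1
  have heq : ϕ v = ϕ u := le_antisymm h1 h
  have h2 : ϕ u = ϕ |u| := aux_even_abs heven u
  have h3 : v = |u| := by
    have := hinv1 v hv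
    have h4 := hinv1 |u| (abs_nonneg u)
    rw [heq, h2] at this
    rw [this] at h4; exact h4.symm ▸ rfl
  linarith [h3 ▸ hlt]

lemma aux_deriv_pos (heven : ∀ t, ϕ (-t) = ϕ t) (hnn : ∀ t, 0 ≤ ϕ t) (h0 : ϕ 0 = 0)
    (hdiff : Differentiable ℝ ϕ) (hderiv_mono : Monotone (deriv ϕ))
    (hinv1 : ∀ t, 0 ≤ t → ϕinv (ϕ t) = t) {a : ℝ} (ha : 0 < a) : 0 < deriv ϕ a := by
  obtain ⟨c, hc, hceq⟩ := exists_deriv_eq_slope ϕ ha hdiff.continuous.continuousOn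
    (hdiff.differentiableOn)
  have hpos : 0 < ϕ a := aux_pos hnn h0 hinv1 ha
  have : 0 < deriv ϕ c := by
    rw [hceq, h0, sub_zero, sub_zero]
    exact div_pos hpos ha
  exact lt_of_lt_of_le this (hderiv_mono hc.2.le)

lemma aux_inv_pos (hnn : ∀ t, 0 ≤ ϕ t) (h0 : ϕ 0 = 0)
    (hinv2 : ∀ s, 0 ≤ s → 0 ≤ ϕinv s ∧ ϕ (ϕinv s) = s) {s : ℝ} (hs : 0 < s) :
    0 < ϕinv s := by
  obtain ⟨h1, h2⟩ := hinv2 s hs.le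
  rcases lt_or_eq_of_le h1 with h | h
  · exact h
  · exfalso; rw [← h, h0] at h2; linarith

lemma aux_inv_hasDeriv (heven : ∀ t, ϕ (-t) = ϕ t) (hnn : ∀ t, 0 ≤ ϕ t) (h0 : ϕ 0 = 0)
    (hdiff : Differentiable ℝ ϕ) (hderiv_mono : Monotone (deriv ϕ))
    (hinv1 : ∀ t, 0 ≤ t → ϕinv (ϕ t) = t)
    (hinv2 : ∀ s, 0 ≤ s → 0 ≤ ϕinv s ∧ ϕ (ϕinv s) = s)
    (hinvdiff : DifferentiableOn ℝ ϕinv (Set.Ioi 0)) {s : ℝ} (hs : 0 < s) :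
    HasDerivAt ϕinv (1 / deriv ϕ (ϕinv s)) s := by
  have hd : DifferentiableAt ℝ ϕinv s :=
    (hinvdiff s hs).differentiableAt (Ioi_mem_nhds hs)
  have hm := hd.hasDerivAt
  have hc : HasDerivAt (ϕ ∘ ϕinv) (deriv ϕ (ϕinv s) * deriv ϕinv s) s :=
    ((hdiff (ϕinv s)).hasDerivAt).comp s hm
  have heqq : ϕ ∘ ϕinv =ᶠ[nhds s] id := by
    filter_upwards [Ioi_mem_nhds hs] with x hx
    exact (hinv2 x (le_of_lt hx)).2
  have h1 : HasDerivAt id (deriv ϕ (ϕinv s) * deriv ϕinv s) s :=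
    hc.congr_of_eventuallyEq heqq.symm
  have huniq : deriv ϕ (ϕinv s) * deriv ϕinv s = 1 := h1.unique (hasDerivAt_id s)
  have hD : 0 < deriv ϕ (ϕinv s) :=
    aux_deriv_pos heven hnn h0 hdiff hderiv_mono hinv1
      (aux_inv_pos hnn h0 hinv2 hs)
  have : deriv ϕinv s = 1 / deriv ϕ (ϕinv s) := by
    rw [eq_div_iff hD.ne']
    linarith
  rw [← this]
  exact hm

lemma aux_ratio (heven : ∀ t, ϕ (-t) = ϕ t) (hnn : ∀ t, 0 ≤ ϕ t) (h0 : ϕ 0 = 0)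
    (hdiff : Differentiable ℝ ϕ) (hderiv_mono : Monotone (deriv ϕ))
    (hinv1 : ∀ t, 0 ≤ t → ϕinv (ϕ t) = t)
    (hinv2 : ∀ s, 0 ≤ s → 0 ≤ ϕinv s ∧ ϕ (ϕinv s) = s)
    {s u : ℝ} (hs : 0 < s) (hsu : ϕ u ≤ s) :
    0 < deriv ϕ (ϕinv s) ∧ |deriv ϕ u| ≤ deriv ϕ (ϕinv s) := by
  have hD : 0 < deriv ϕ (ϕinv s) :=
    aux_deriv_pos heven hnn h0 hdiff hderiv_mono hinv1 (aux_inv_pos hnn h0 hinv2 hs)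
  refine ⟨hD, ?_⟩
  have h1 : |u| ≤ ϕinv s := by
    apply aux_le heven hdiff hderiv_mono hinv1 (hinv2 s hs.le).1
    rw [(hinv2 s hs.le).2]; exact hsu
  calc |deriv ϕ u| = deriv ϕ |u| := aux_abs_deriv heven hderiv_mono u
    _ ≤ deriv ϕ (ϕinv s) := hderiv_mono h1

end aux
section aux2
variable {ϕ ϕinv : ℝ → ℝ}

lemma aux_1d (heven : ∀ t, ϕ (-t) = ϕ t) (hnn : ∀ t, 0 ≤ ϕ t) (h0 : ϕ 0 = 0)
    (hdiff : Differentiable ℝ ϕ) (hderiv_mono : Monotone (deriv ϕ))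
    (hinv1 : ∀ t, 0 ≤ t → ϕinv (ϕ t) = t)
    (hinv2 : ∀ s, 0 ≤ s → 0 ≤ ϕinv s ∧ ϕ (ϕinv s) = s)
    (hinvdiff : DifferentiableOn ℝ ϕinv (Set.Ioi 0))
    {η : ℝ} (hη : 0 < η) (c : ℝ) (hc : 0 < c) (t : ℝ) :
    HasDerivAt (fun t => η * ϕinv (c + ϕ (t / η)))
      (deriv ϕ (t / η) / deriv ϕ (ϕinv (c + ϕ (t / η)))) t := by
  have hS : 0 < c + ϕ (t / η) := by have := hnn (t / η); linarith
  have h1 : HasDerivAt (fun t : ℝ => t / η) (1 / η) t := by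
    simpa using (hasDerivAt_id t).div_const η
  have h2 : HasDerivAt (fun t => ϕ (t / η)) (deriv ϕ (t / η) * (1 / η)) t :=
    ((hdiff (t / η)).hasDerivAt).comp t h1
  have h3 : HasDerivAt (fun t => c + ϕ (t / η)) (deriv ϕ (t / η) * (1 / η)) t :=
    h2.const_add c
  have h4 : HasDerivAt (fun s => η * ϕinv s)
      (η * (1 / deriv ϕ (ϕinv (c + ϕ (t / η))))) (c + ϕ (t / η)) :=
    (aux_inv_hasDeriv heven hnn h0 hdiff hderiv_mono hinv1 hinv2 hinvdiff hS).const_mul η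
  have h5 := h4.comp t h3
  have hD : 0 < deriv ϕ (ϕinv (c + ϕ (t / η))) :=
    (aux_ratio heven hnn h0 hdiff hderiv_mono hinv1 hinv2 hS (by linarith [hnn (t/η)])).1
  refine h5.congr_deriv ?_
  field_simp

lemma aux_lip1 (heven : ∀ t, ϕ (-t) = ϕ t) (hnn : ∀ t, 0 ≤ ϕ t) (h0 : ϕ 0 = 0)
    (hdiff : Differentiable ℝ ϕ) (hderiv_mono : Monotone (deriv ϕ))
    (hinv1 : ∀ t, 0 ≤ t → ϕinv (ϕ t) = t)
    (hinv2 : ∀ s, 0 ≤ s → 0 ≤ ϕinv s ∧ ϕ (ϕinv s) = s)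
    (hinvdiff : DifferentiableOn ℝ ϕinv (Set.Ioi 0))
    {η : ℝ} (hη : 0 < η) (c : ℝ) (hc : 0 ≤ c) :
    LipschitzWith 1 (fun t => η * ϕinv (c + ϕ (t / η))) := by
  rcases eq_or_lt_of_le hc with h | h
  · have heq : (fun t => η * ϕinv (c + ϕ (t / η))) = fun t => |t| := by
      funext t
      rw [← h, zero_add, aux_even_abs heven (t / η), abs_div, abs_of_pos hη,
        hinv1 _ (by positivity)]
      field_simp
    rw [heq]
    exact (lipschitzWith_one_norm (E := ℝ))
  · apply lipschitzWith_of_nnnorm_deriv_le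
    · intro t
      exact (aux_1d heven hnn h0 hdiff hderiv_mono hinv1 hinv2 hinvdiff hη c h t).differentiableAt
    · intro t
      have hd := (aux_1d heven hnn h0 hdiff hderiv_mono hinv1 hinv2 hinvdiff hη c h t).deriv
      rw [hd]
      have hS : 0 < c + ϕ (t / η) := by have := hnn (t / η); linarith
      obtain ⟨hD, hle⟩ := aux_ratio heven hnn h0 hdiff hderiv_mono hinv1 hinv2 hS
        (by linarith [hnn (t / η)] : ϕ (t / η) ≤ c + ϕ (t / η))
      have : |deriv ϕ (t / η) / deriv ϕ (ϕinv (c + ϕ (t / η)))| ≤ 1 := by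
        rw [abs_div, abs_of_pos hD]
        exact div_le_one_of_le₀ hle hD.le
      rw [← NNReal.coe_le_coe]
      simpa [Real.norm_eq_abs, abs_div] using this

end aux2
section aux3
variable {ϕ ϕinv : ℝ → ℝ}

lemma aux_tele (heven : ∀ t, ϕ (-t) = ϕ t) (hnn : ∀ t, 0 ≤ ϕ t) (h0 : ϕ 0 = 0)
    (hdiff : Differentiable ℝ ϕ) (hderiv_mono : Monotone (deriv ϕ))
    (hinv1 : ∀ t, 0 ≤ t → ϕinv (ϕ t) = t)
    (hinv2 : ∀ s, 0 ≤ s → 0 ≤ ϕinv s ∧ ϕ (ϕinv s) = s)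
    (hinvdiff : DifferentiableOn ℝ ϕinv (Set.Ioi 0))
    {d : ℕ} {η : ℝ} (hη : 0 < η) (x y : Fin d → ℝ) (s : Finset (Fin d)) :
    |η * ϕinv (∑ i, ϕ (s.piecewise y x i / η)) - η * ϕinv (∑ i, ϕ (x i / η))|
      ≤ ∑ i ∈ s, |y i - x i| := by
  classical
  induction s using Finset.induction with
  | empty => simp
  | @insert a s ha ih =>
    have hupdate : ∀ (w : Fin d → ℝ) (t : ℝ),
        ∑ i, ϕ (Function.update w a t i / η)
          = ϕ (t / η) + ∑ i ∈ Finset.univ.erase a, ϕ (w i / η) := by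
      intro w t
      rw [← Finset.add_sum_erase Finset.univ
        (fun i => ϕ (Function.update w a t i / η)) (Finset.mem_univ a)]
      congr 1
      · rw [Function.update_self]
      · exact Finset.sum_congr rfl fun i hi => by
          rw [Function.update_of_ne (Finset.ne_of_mem_erase hi)]
    set w := s.piecewise y x with hw
    have hwa : w a = x a := Finset.piecewise_eq_of_notMem _ _ _ ha
    set c := ∑ i ∈ Finset.univ.erase a, ϕ (w i / η) with hcdef
    have hcnn : 0 ≤ c := Finset.sum_nonneg fun i _ => hnn _
    have hlip := aux_lip1 heven hnn h0 hdiff hderiv_mono hinv1 hinv2 hinvdiff hη c hcnn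
    have hweq : Function.update w a (x a) = w := by
      rw [← hwa]; exact Function.update_eq_self a w
    have hsumw : ∑ i, ϕ (w i / η) = ϕ (x a / η) + c := by
      conv_lhs => rw [← hweq]
      exact hupdate w (x a)
    have h1 : |η * ϕinv (∑ i, ϕ (Function.update w a (y a) i / η))
        - η * ϕinv (∑ i, ϕ (w i / η))| ≤ |y a - x a| := by
      rw [hupdate w (y a), hsumw, add_comm (ϕ (y a / η)) c, add_comm (ϕ (x a / η)) c]
      have := hlip.dist_le_mul (y a) (x a)
      simpa [Real.dist_eq] using this
    rw [Finset.piecewise_insert, Finset.sum_insert ha]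
    calc |η * ϕinv (∑ i, ϕ (Function.update w a (y a) i / η))
          - η * ϕinv (∑ i, ϕ (x i / η))|
        ≤ |η * ϕinv (∑ i, ϕ (Function.update w a (y a) i / η))
            - η * ϕinv (∑ i, ϕ (w i / η))|
          + |η * ϕinv (∑ i, ϕ (w i / η)) - η * ϕinv (∑ i, ϕ (x i / η))| :=
        abs_sub_le _ _ _
      _ ≤ |y a - x a| + ∑ i ∈ s, |y i - x i| := add_le_add h1 ih

end aux3

theorem stmt10 {d : ℕ} (ϕ ϕinv : ℝ → ℝ)
    (heven : ∀ t, ϕ (-t) = ϕ t) (hnn : ∀ t, 0 ≤ ϕ t) (h0 : ϕ 0 = 0)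
    (hdiff : Differentiable ℝ ϕ)
    (hderiv_mono : Monotone (deriv ϕ))
    (hinv1 : ∀ t, 0 ≤ t → ϕinv (ϕ t) = t)
    (hinv2 : ∀ s, 0 ≤ s → 0 ≤ ϕinv s ∧ ϕ (ϕinv s) = s)
    (hinvdiff : DifferentiableOn ℝ ϕinv (Set.Ioi 0)) :
    (∀ η : ℝ, 0 < η → ∀ β : Fin d → ℝ, β ≠ 0 → ∀ k,
      fderiv ℝ (fun b : Fin d → ℝ => η * ϕinv (∑ i, ϕ (b i / η))) β (Pi.single k 1)
        = deriv ϕ (β k / η) / deriv ϕ (ϕinv (∑ i, ϕ (β i / η)))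
      ∧ deriv ϕ (β k / η) / deriv ϕ (ϕinv (∑ i, ϕ (β i / η))) ∈ Set.Icc (-1 : ℝ) 1)
    ∧ ∃ K : NNReal, ∀ η : ℝ, 0 < η →
        LipschitzWith K (fun b : Fin d → ℝ => η * ϕinv (∑ i, ϕ (b i / η))) := by
  constructor
  · intro η hη β hβ k
    set S := ∑ i, ϕ (β i / η) with hSdef
    have hS : 0 < S := by
      obtain ⟨j, hj⟩ := Function.ne_iff.mp hβ
      apply Finset.sum_pos' (fun i _ => hnn _)
      refine ⟨j, Finset.mem_univ j, ?_⟩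
      rw [aux_even_abs heven]
      apply aux_pos hnn h0 hinv1
      exact abs_pos.mpr (div_ne_zero hj (ne_of_gt hη))
    set D := deriv ϕ (ϕinv S) with hDdef
    have hsu : ϕ (β k / η) ≤ S :=
      Finset.single_le_sum (f := fun i => ϕ (β i / η)) (fun i _ => hnn _) (Finset.mem_univ k)
    obtain ⟨hD, hle⟩ := aux_ratio heven hnn h0 hdiff hderiv_mono hinv1 hinv2 hS hsu
    constructor
    · have hi : ∀ i : Fin d, HasFDerivAt (fun b : Fin d → ℝ => ϕ (b i / η))
          ((deriv ϕ (β i / η) * (1 / η)) •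
            (ContinuousLinearMap.proj i : (Fin d → ℝ) →L[ℝ] ℝ)) β := by
        intro i
        have h1 : HasDerivAt (fun t : ℝ => t / η) (1 / η) (β i) := by
          simpa using (hasDerivAt_id (β i)).div_const η
        have h2 : HasDerivAt (fun t => ϕ (t / η)) (deriv ϕ (β i / η) * (1 / η)) (β i) :=
          ((hdiff (β i / η)).hasDerivAt).comp (β i) h1
        exact HasDerivAt.comp_hasFDerivAt (f := fun b : Fin d → ℝ => b i) β h2
          ((ContinuousLinearMap.proj i : (Fin d → ℝ) →L[ℝ] ℝ).hasFDerivAt)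
      have hsum : HasFDerivAt (fun b : Fin d → ℝ => ∑ i, ϕ (b i / η))
          (∑ i, (deriv ϕ (β i / η) * (1 / η)) •
            (ContinuousLinearMap.proj i : (Fin d → ℝ) →L[ℝ] ℝ)) β :=
        HasFDerivAt.fun_sum (fun i _ => hi i)
      have houter : HasDerivAt (fun s => η * ϕinv s) (η * (1 / D)) S :=
        (aux_inv_hasDeriv heven hnn h0 hdiff hderiv_mono hinv1 hinv2 hinvdiff hS).const_mul η
      have hf := houter.comp_hasFDerivAt β hsum
      have hf' : HasFDerivAt (fun b : Fin d → ℝ => η * ϕinv (∑ i, ϕ (b i / η)))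
          ((η * (1 / D)) • ∑ i, (deriv ϕ (β i / η) * (1 / η)) •
            (ContinuousLinearMap.proj i : (Fin d → ℝ) →L[ℝ] ℝ)) β := hf
      rw [hf'.fderiv]
      simp only [ContinuousLinearMap.smulRight_apply, ContinuousLinearMap.coe_smul',
        Pi.smul_apply, ContinuousLinearMap.coe_sum', Finset.sum_apply,
        ContinuousLinearMap.proj_apply, Pi.single_apply, smul_eq_mul, mul_ite, mul_one, mul_zero]
      rw [Finset.sum_ite_eq' Finset.univ k (fun i => deriv ϕ (β i / η) * (1 / η))]
      simp only [Finset.mem_univ, if_true]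
      field_simp
    · rw [Set.mem_Icc, ← abs_le, abs_div, abs_of_pos hD]
      exact div_le_one_of_le₀ hle hD.le
  · refine ⟨(d : NNReal), fun η hη => ?_⟩
    apply LipschitzWith.of_dist_le_mul
    intro x y
    have htele := aux_tele heven hnn h0 hdiff hderiv_mono hinv1 hinv2 hinvdiff hη x y
      Finset.univ
    rw [Finset.piecewise_univ] at htele
    have h1 : dist (η * ϕinv (∑ i, ϕ (x i / η))) (η * ϕinv (∑ i, ϕ (y i / η)))
        ≤ ∑ i, |y i - x i| := by
      rw [Real.dist_eq, abs_sub_comm]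
      exact htele
    refine h1.trans ?_
    have h2 : ∀ i : Fin d, |y i - x i| ≤ dist x y := fun i => by
      rw [← Real.dist_eq, dist_comm]
      exact dist_le_pi_dist x y i
    calc ∑ i, |y i - x i| ≤ ∑ _i : Fin d, dist x y := Finset.sum_le_sum fun i _ => h2 i
      _ = d * dist x y := by rw [Finset.sum_const, Finset.card_univ, Fintype.card_fin,
            nsmul_eq_mul]
      _ = (d : NNReal) * dist x y := by norm_num
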